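/- arXiv:2307.09414 — 3 statements merged into one kernel-verified Lean document; each statement's English description precedes it below -/
import Mathlib

section
/- Let F = ℚ(x,y) be the rational function field in two variables and let G = Fˣ be its multiplicative group, written additively via ⋀²(G) over ℤ. With f₃ = x/y, f₄ = x(1−y)/(y(1−x)), f₆ = (1−y)/(1−x), f₈ = x, f₉ = y, the following identity holds in ⋀²(Fˣ): f₄∧(1−f₄) − f₉∧(1−f₉) + f₈∧(1−f₈) − f₃∧(1−f₃) − f₆∧(1−f₆) = 0. -/
/-- The rational function field `ℚ(x,y)` in two variables. -/
noncomputable abbrev SK.F : Type := FractionRing (MvPolynomial (Fin 2) ℚ)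

noncomputable def SK.x : SK.F := algebraMap (MvPolynomial (Fin 2) ℚ) SK.F (MvPolynomial.X 0)
noncomputable def SK.y : SK.F := algebraMap (MvPolynomial (Fin 2) ℚ) SK.F (MvPolynomial.X 1)

open ExteriorAlgebra in
theorem SK.aux {R M : Type*} [CommRing R] [AddCommGroup M] [Module R M] (a b c d e : M) :
    ι R (a+d-b-c) * ι R (e-b-c) - ι R b * ι R d + ι R a * ι R c
      - ι R (a-b) * ι R (e-b) - ι R (d-c) * ι R (e-c) = 0 := by
  have swap : ∀ x y : M, ι R y * ι R x = -(ι R x * ι R y) := fun x y =>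
    eq_neg_of_add_eq_zero_left (by rw [add_comm]; exact ι_add_mul_swap x y)
  simp only [map_add, map_sub, add_mul, sub_mul, mul_add, mul_sub]
  simp only [ι_sq_zero, swap d b, swap c d, swap b c]
  abel

open SK ExteriorAlgebra in
/-- Zagier's tensor criterion for Schaeffer's five-term dilogarithm equation:
`f₄∧(1−f₄) − f₉∧(1−f₉) + f₈∧(1−f₈) − f₃∧(1−f₃) − f₆∧(1−f₆) = 0` in `⋀²(Fˣ)`,
realized as degree-2 elements of the exterior algebra over `ℤ` of the
multiplicative group `Fˣ` written additively. -/
theorem spence_kummer_stmt8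
    (u₃ u₄ u₆ u₈ u₉ w₃ w₄ w₆ w₈ w₉ : SK.Fˣ)
    (hu₃ : (u₃ : SK.F) = x / y)
    (hu₄ : (u₄ : SK.F) = x * (1 - y) / (y * (1 - x)))
    (hu₆ : (u₆ : SK.F) = (1 - y) / (1 - x))
    (hu₈ : (u₈ : SK.F) = x)
    (hu₉ : (u₉ : SK.F) = y)
    (hw₃ : (w₃ : SK.F) = 1 - x / y)
    (hw₄ : (w₄ : SK.F) = 1 - x * (1 - y) / (y * (1 - x)))
    (hw₆ : (w₆ : SK.F) = 1 - (1 - y) / (1 - x))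
    (hw₈ : (w₈ : SK.F) = 1 - x)
    (hw₉ : (w₉ : SK.F) = 1 - y) :
    ι ℤ (Additive.ofMul u₄) * ι ℤ (Additive.ofMul w₄)
      - ι ℤ (Additive.ofMul u₉) * ι ℤ (Additive.ofMul w₉)
      + ι ℤ (Additive.ofMul u₈) * ι ℤ (Additive.ofMul w₈)
      - ι ℤ (Additive.ofMul u₃) * ι ℤ (Additive.ofMul w₃)
      - ι ℤ (Additive.ofMul u₆) * ι ℤ (Additive.ofMul w₆)
      = (0 : ExteriorAlgebra ℤ (Additive SK.Fˣ)) := by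
  have hy : (SK.y) ≠ 0 := hu₉ ▸ u₉.ne_zero
  have hx1 : (1 - SK.x) ≠ 0 := hw₈ ▸ w₈.ne_zero
  have h3 : u₃ = u₈ / u₉ := by
    ext; simp only [Units.val_div_eq_div_val, hu₃, hu₈, hu₉]
  have h4 : u₄ = u₈ * w₉ / u₉ / w₈ := by
    ext; simp only [Units.val_div_eq_div_val, Units.val_mul, hu₄, hu₈, hu₉, hw₈, hw₉]
    field_simp
  have h6 : u₆ = w₉ / w₈ := by
    ext; simp only [Units.val_div_eq_div_val, hu₆, hw₈, hw₉]
  have hw3 : w₃ = w₃ * u₉ / u₉ := (mul_div_cancel_right w₃ u₉).symm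
  have hw4 : w₄ = w₃ * u₉ / u₉ / w₈ := by
    ext; simp only [Units.val_div_eq_div_val, Units.val_mul, hw₄, hw₃, hu₉, hw₈]
    field_simp
    ring
  have hw6 : w₆ = w₃ * u₉ / w₈ := by
    ext; simp only [Units.val_div_eq_div_val, Units.val_mul, hw₆, hw₃, hu₉, hw₈]
    field_simp
    ring
  have e3 : Additive.ofMul u₃ = Additive.ofMul u₈ - Additive.ofMul u₉ := by
    rw [h3, ofMul_div]
  have e4 : Additive.ofMul u₄ = Additive.ofMul u₈ + Additive.ofMul w₉
      - Additive.ofMul u₉ - Additive.ofMul w₈ := by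
    rw [h4, ofMul_div, ofMul_div, ofMul_mul]
  have e6 : Additive.ofMul u₆ = Additive.ofMul w₉ - Additive.ofMul w₈ := by
    rw [h6, ofMul_div]
  have f3 : Additive.ofMul w₃ = Additive.ofMul (w₃ * u₉) - Additive.ofMul u₉ := by
    rw [← ofMul_div, mul_div_cancel_right]
  have f4 : Additive.ofMul w₄ = Additive.ofMul (w₃ * u₉) - Additive.ofMul u₉
      - Additive.ofMul w₈ := by
    rw [hw4, ofMul_div, ofMul_div]
  have f6 : Additive.ofMul w₆ = Additive.ofMul (w₃ * u₉) - Additive.ofMul w₈ := by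
    rw [hw6, ofMul_div]
  rw [e3, e4, e6, f3, f4, f6]
  exact SK.aux (Additive.ofMul u₈) (Additive.ofMul u₉) (Additive.ofMul w₈)
    (Additive.ofMul w₉) (Additive.ofMul (w₃ * u₉))
end

section
/- With the vectors vᵢ, wᵢ ∈ ℤ⁶ defined by: v₁ = (1,−1,0,−2,2,0), w₁ = (0,−1,1,−2,0,1); v₂ = (1,1,0,0,0,0), w₂ = (0,0,0,0,0,1); v₃ = (1,−1,0,0,0,0), w₃ = (0,−1,1,0,0,0); v₄ = (1,−1,0,−1,1,0), w₄ = (0,−1,1,−1,0,0); v₅ = (1,0,0,−1,1,0), w₅ = (0,0,0,−1,0,1); v₆ = (0,0,0,−1,1,0), w₆ = (0,0,1,−1,0,0); v₇ = (0,−1,0,−1,1,0), w₇ = (0,−1,0,−1,0,1); v₈ = (1,0,0,0,0,0), w₈ = (0,0,0,1,0,0); v₉ = (0,1,0,0,0,0), w₉ = (0,0,0,0,1,0), and coefficients (d₁,…,d₉) = (1,1,1,−2,−2,−2,−2,−2,−2), one has Σᵢ dᵢ · vᵢ ⊗ (vᵢ ∧ wᵢ) = 0 in ℤ⁶ ⊗_ℤ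 ⋀²(ℤ⁶). -/
def SKv : Fin 9 → (Fin 6 → ℤ)
  | 0 => ![1, -1, 0, -2, 2, 0]
  | 1 => ![1, 1, 0, 0, 0, 0]
  | 2 => ![1, -1, 0, 0, 0, 0]
  | 3 => ![1, -1, 0, -1, 1, 0]
  | 4 => ![1, 0, 0, -1, 1, 0]
  | 5 => ![0, 0, 0, -1, 1, 0]
  | 6 => ![0, -1, 0, -1, 1, 0]
  | 7 => ![1, 0, 0, 0, 0, 0]
  | 8 => ![0, 1, 0, 0, 0, 0]

def SKw : Fin 9 → (Fin 6 → ℤ)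
  | 0 => ![0, -1, 1, -2, 0, 1]
  | 1 => ![0, 0, 0, 0, 0, 1]
  | 2 => ![0, -1, 1, 0, 0, 0]
  | 3 => ![0, -1, 1, -1, 0, 0]
  | 4 => ![0, 0, 0, -1, 0, 1]
  | 5 => ![0, 0, 1, -1, 0, 0]
  | 6 => ![0, -1, 0, -1, 0, 1]
  | 7 => ![0, 0, 0, 1, 0, 0]
  | 8 => ![0, 0, 0, 0, 1, 0]

def SKd : Fin 9 → ℤ := ![1, 1, 1, -2, -2, -2, -2, -2, -2]

open ExteriorAlgebra TensorProduct

lemma SK_pi_decomp (v : Fin 6 → ℤ) : v = ∑ j, v j • (Pi.single j 1 : Fin 6 → ℤ) := by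
  ext k
  simp [Finset.sum_apply, Pi.single_apply]

lemma SK_expand (v w : Fin 6 → ℤ) :
    v ⊗ₜ[ℤ] (ι ℤ v * ι ℤ w) =
    ∑ k : Fin 6, ∑ j : Fin 6, ∑ i : Fin 6,
      ((w k * v j * v i) • (Pi.single i 1 : Fin 6 → ℤ)) ⊗ₜ[ℤ]
        (ι ℤ (Pi.single j 1 : Fin 6 → ℤ) * ι ℤ (Pi.single k 1 : Fin 6 → ℤ)) := by
  conv_lhs => rw [SK_pi_decomp v, SK_pi_decomp w]
  simp only [map_sum, map_smul, Finset.sum_mul, Finset.mul_sum, sum_tmul, tmul_sum,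
    smul_mul_assoc, mul_smul_comm, smul_tmul', tmul_smul, smul_smul, Finset.smul_sum]

lemma SK_sym : ∀ k j i : Fin 6,
    (∑ n : Fin 9, SKd n * (SKw n k * SKv n j * SKv n i)) =
    (∑ n : Fin 9, SKd n * (SKw n j * SKv n k * SKv n i)) := by decide

open ExteriorAlgebra TensorProduct in
/-- Degree-3 homotopy/tensor criterion for Spence–Kummer's nine-term
trilogarithm functional equation: `Σᵢ dᵢ · vᵢ ⊗ (vᵢ ∧ wᵢ) = 0` in
`ℤ⁶ ⊗_ℤ ⋀²(ℤ⁶)`. -/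
theorem spence_kummer_stmt12 :
    (∑ i : Fin 9, SKd i • (SKv i ⊗ₜ[ℤ] (ι ℤ (SKv i) * ι ℤ (SKw i))))
      = (0 : (Fin 6 → ℤ) ⊗[ℤ] ExteriorAlgebra ℤ (Fin 6 → ℤ)) := by
  simp only [SK_expand, Finset.smul_sum, smul_tmul', smul_smul]
  simp only [Finset.sum_comm (γ := Fin 9) (α := Fin 6)]
  simp only [← TensorProduct.sum_tmul, ← Finset.sum_smul]
  have Vsym : ∀ k j : Fin 6,
      (∑ a : Fin 6, (∑ n : Fin 9, SKd n * (SKw n k * SKv n j * SKv n a)) •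
        (Pi.single a 1 : Fin 6 → ℤ)) =
      (∑ a : Fin 6, (∑ n : Fin 9, SKd n * (SKw n j * SKv n k * SKv n a)) •
        (Pi.single a 1 : Fin 6 → ℤ)) := by
    intro k j
    exact Finset.sum_congr rfl fun a _ => by rw [SK_sym k j a]
  rw [← Finset.sum_product']
  refine Finset.sum_ninvolution Prod.swap ?_ ?_ (fun _ => Finset.mem_univ _) (fun p => Prod.swap_swap p)
  · rintro ⟨k, j⟩
    simp only [Prod.swap_prod_mk]
    rw [Vsym j k, ← TensorProduct.tmul_add, ι_add_mul_swap, TensorProduct.tmul_zero]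
  · rintro ⟨k, j⟩ h heq
    apply h
    have hjk : j = k := (Prod.mk.injEq ..).mp heq |>.1
    subst hjk
    rw [ι_sq_zero, TensorProduct.tmul_zero]
end

section
/- Define Li₂(z) = Σ_{n=1}^∞ zⁿ/n² for real z with |z| < 1 (extended continuously to z = 1 with Li₂(1) = π²/6). For all real x, y with 0 < x < y < 1, the following five-term identity of Schaeffer holds: Li₂(x(1−y)/(y(1−x))) − Li₂(y) + Li₂(x) − Li₂(x/y) − Li₂((1−y)/(1−x)) = log(y)·log((1−y)/(1−x)) − π²/6. -/
open Real Set Filter Topology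

/-- The dilogarithm, defined on `[-1,1]` by the convergent power series
`Li₂(z) = Σ_{n ≥ 1} zⁿ/n²` (at `z = 1` this converges to `π²/6`). -/
noncomputable def Li2 (z : ℝ) : ℝ := ∑' n : ℕ, z ^ (n + 1) / ((n : ℝ) + 1) ^ 2

lemma aux_summable : Summable (fun n : ℕ => 1 / ((n : ℝ) + 1) ^ 2) := by
  have := Real.summable_one_div_nat_pow.mpr (le_refl 2)
  exact_mod_cast (summable_nat_add_iff 1).mpr this

lemma Li2_zero : Li2 0 = 0 := by
  simp [Li2]

lemma Li2_one : Li2 1 = π ^ 2 / 6 := by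
  have h := hasSum_zeta_two
  have h2 : HasSum (fun n : ℕ => (1:ℝ) / ((n : ℝ) + 1) ^ 2)
      (π ^ 2 / 6 - ∑ i ∈ Finset.range 1, (1:ℝ) / (i:ℝ) ^ 2) := by
    exact_mod_cast (hasSum_nat_add_iff' (f := fun n : ℕ => (1:ℝ) / (n:ℝ) ^ 2) 1).mpr h
  simp only [Finset.range_one, Finset.sum_singleton, Nat.cast_zero] at h2
  norm_num at h2
  simpa [Li2, one_div] using h2.tsum_eq

lemma Li2_continuousOn : ContinuousOn Li2 (Icc (-1 : ℝ) 1) := by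
  apply continuousOn_tsum (u := fun n : ℕ => 1 / ((n : ℝ) + 1) ^ 2)
    (fun i => (continuous_pow _).continuousOn.div_const _) aux_summable
  intro n x hx
  rw [Real.norm_eq_abs, abs_div, abs_pow, abs_of_nonneg (by positivity : (0:ℝ) ≤ ((n:ℝ)+1)^2)]
  apply div_le_div_of_nonneg_right ?_ (by positivity)
  exact pow_le_one₀ (abs_nonneg x) (abs_le.mpr ⟨hx.1, hx.2⟩)

lemma Li2_hasDerivAt {z : ℝ} (h0 : 0 < z) (h1 : z < 1) :
    HasDerivAt Li2 (-Real.log (1 - z) / z) z := by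
  have hz0 : z ≠ 0 := h0.ne'
  set r : ℝ := (1 + z) / 2 with hr
  have hr1 : r < 1 := by rw [hr]; linarith
  have hzr : z < r := by rw [hr]; linarith
  have hr0 : 0 < r := by rw [hr]; linarith
  have hD : HasDerivAt (fun w => ∑' n : ℕ, w ^ (n + 1) / ((n : ℝ) + 1) ^ 2)
      (∑' n : ℕ, z ^ n / ((n : ℝ) + 1)) z := by
    apply hasDerivAt_tsum_of_isPreconnected (u := fun n : ℕ => r ^ n)
      (summable_geometric_of_lt_one hr0.le hr1) isOpen_Ioo (isPreconnected_Ioo)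
      (g' := fun n y => y ^ n / ((n : ℝ) + 1)) (y₀ := 0) (t := Ioo (-r) r)
    · intro n y _
      have h := (hasDerivAt_pow (n + 1) y).div_const (((n : ℝ) + 1) ^ 2)
      refine h.congr_deriv ?_
      push_cast
      field_simp
    · intro n y hy
      have hyr : |y| ≤ r := le_of_lt (abs_lt.mpr ⟨hy.1, hy.2⟩)
      rw [Real.norm_eq_abs, abs_div, abs_pow, abs_of_nonneg (by positivity : (0:ℝ) ≤ (n:ℝ)+1)]
      calc |y| ^ n / ((n:ℝ)+1) ≤ r ^ n / 1 :=
            div_le_div₀ (by positivity) (pow_le_pow_left₀ (abs_nonneg _) hyr n) one_pos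
              (by linarith [Nat.cast_nonneg (α := ℝ) n])
        _ = r ^ n := div_one _
    · exact ⟨by linarith, hr0⟩
    · apply summable_of_ne_finset_zero (s := ∅); intro n _; simp
    · exact ⟨by linarith, hzr⟩
  have hsum : (∑' n : ℕ, z ^ n / ((n : ℝ) + 1)) = -Real.log (1 - z) / z := by
    have h := hasSum_pow_div_log_of_abs_lt_one (x := z) (by rw [abs_lt]; constructor <;> linarith)
    have hz := h.mul_left z⁻¹
    have he : (fun i : ℕ => z⁻¹ * (z ^ (i + 1) / ((i : ℝ) + 1)))
        = fun n : ℕ => z ^ n / ((n : ℝ) + 1) := by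
      funext n; field_simp [pow_succ]; ring
    rw [he] at hz
    rw [div_eq_inv_mul]
    exact hz.tsum_eq
  rw [← hsum]
  exact hD

lemma euler_reflection {z : ℝ} (h0 : 0 < z) (h1 : z < 1) :
    Li2 z + Li2 (1 - z) = π ^ 2 / 6 - Real.log z * Real.log (1 - z) := by
  set G : ℝ → ℝ := fun t => Li2 t + Li2 (1 - t) + Real.log t * Real.log (1 - t) with hG
  have hcont : ContinuousOn G (Icc z 1) := by
    have c1 : ContinuousOn Li2 (Icc z 1) :=
      Li2_continuousOn.mono (fun t ht => ⟨by linarith [ht.1], ht.2⟩)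
    have c2 : ContinuousOn (fun t => Li2 (1 - t)) (Icc z 1) := by
      apply Li2_continuousOn.comp (continuous_const.sub continuous_id).continuousOn
      intro t ht
      obtain ⟨ht1, ht2⟩ := ht
      constructor <;> simp only [Pi.sub_apply, id_eq] <;> linarith
    refine (c1.add c2).add ?_
    intro t ht
    rcases eq_or_ne t 1 with rfl | hne
    · -- continuity at 1 via the 0·∞ limit
      rw [← continuousWithinAt_diff_self]
      have hPeq : (fun t => Real.log t * Real.log (1 - t))
          = fun t => (Real.log t / (t - 1)) * -((1 - t) * Real.log (1 - t)) := by
        funext t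
        rcases eq_or_ne t 1 with rfl | h
        · simp
        · have h' : t - 1 ≠ 0 := sub_ne_zero.mpr h
          field_simp
          ring
      rw [hPeq]
      have hf1 : Tendsto (fun t : ℝ => Real.log t / (t - 1))
          (nhdsWithin (1:ℝ) {(1:ℝ)}ᶜ) (𝓝 1) := by
        have h := hasDerivAt_iff_tendsto_slope.mp (Real.hasDerivAt_log one_ne_zero)
        rw [inv_one] at h
        refine h.congr' (Eventually.of_forall fun t => ?_)
        simp [slope_def_field, Real.log_one]
      have hf2 : Tendsto (fun t : ℝ => -((1 - t) * Real.log (1 - t))) (𝓝 (1:ℝ)) (𝓝 0) := by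
        have hc : Continuous fun t : ℝ => -((1 - t) * Real.log (1 - t)) :=
          (Real.continuous_mul_log.comp (continuous_const.sub continuous_id)).neg
        have := hc.tendsto 1
        simpa using this
      have key := hf1.mul (hf2.mono_left nhdsWithin_le_nhds)
      rw [one_mul] at key
      have key2 := key.mono_left (nhdsWithin_mono 1 (fun u (hu : u ∈ Icc z 1 \ {1}) => hu.2))
      unfold ContinuousWithinAt
      convert key2 using 2
      norm_num
    · have h0t : (0:ℝ) < t := lt_of_lt_of_le h0 ht.1
      have h1t : t < 1 := lt_of_le_of_ne ht.2 hne
      have hlogc : ContinuousAt (fun u : ℝ => Real.log (1 - u)) t :=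
        (Real.continuousAt_log (sub_ne_zero.mpr hne.symm)).comp
          ((continuous_const.sub continuous_id).continuousAt)
      exact ((Real.continuousAt_log h0t.ne').mul hlogc).continuousWithinAt
  have hderiv : ∀ t ∈ Ioo z 1, HasDerivAt G 0 t := by
    intro t ht
    have h0t : (0:ℝ) < t := h0.trans ht.1
    have h1t : t < 1 := ht.2
    have hs : (0:ℝ) < 1 - t := by linarith
    have hA := Li2_hasDerivAt h0t h1t
    have hB : HasDerivAt (fun u : ℝ => Li2 (1 - u)) (-(-Real.log (1 - (1 - t)) / (1 - t)) ) t := by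
      have hinner : HasDerivAt (fun u : ℝ => 1 - u) (-1) t := by
        simpa using (hasDerivAt_id t).const_sub 1
      have := (Li2_hasDerivAt hs (by linarith)).comp t hinner
      simp [mul_comm] at this ⊢; exact this
    have hlog1 : HasDerivAt Real.log t⁻¹ t := Real.hasDerivAt_log h0t.ne'
    have hlog2 : HasDerivAt (fun u : ℝ => Real.log (1 - u)) (-(1 - t)⁻¹) t := by
      have hinner : HasDerivAt (fun u : ℝ => 1 - u) (-1) t := by
        simpa using (hasDerivAt_id t).const_sub 1
      have := (Real.hasDerivAt_log hs.ne').comp t hinner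
      simp at this ⊢; exact this
    have hC := hlog1.mul hlog2
    have htotal := (hA.add hB).add hC
    refine htotal.congr_deriv ?_
    simp only [sub_sub_cancel]
    field_simp
    ring
  obtain ⟨c, hc, hc0⟩ := exists_hasDerivAt_eq_slope G (fun _ => 0) h1 hcont hderiv
  have hGz : G z = G 1 := by
    have h1z : (1:ℝ) - z ≠ 0 := ne_of_gt (by linarith)
    field_simp at hc0
    linarith
  have hG1 : G 1 = π ^ 2 / 6 := by
    simp [hG, Li2_one, Li2_zero]
  have := hGz.trans hG1
  simp only [hG] at this
  linarith

/-- Schaeffer's five-term functional equation of the dilogarithm, for real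
parameters `0 < x < y < 1`. -/
theorem spence_kummer_stmt17 (x y : ℝ) (hx : 0 < x) (hxy : x < y) (hy : y < 1) :
    Li2 (x * (1 - y) / (y * (1 - x))) - Li2 y + Li2 x - Li2 (x / y)
        - Li2 ((1 - y) / (1 - x))
      = Real.log y * Real.log ((1 - y) / (1 - x)) - Real.pi ^ 2 / 6 := by
  have hy0 : 0 < y := hx.trans hxy
  have hy1 : (0:ℝ) < 1 - y := by linarith
  set F : ℝ → ℝ := fun t =>
    Li2 (t * (1 - y) / (y * (1 - t))) - Li2 y + Li2 t - Li2 (t / y)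
      - Li2 ((1 - y) / (1 - t))
      - (Real.log y * Real.log ((1 - y) / (1 - t)) - π ^ 2 / 6) with hF
  -- continuity on [0, x]
  have hcont : ContinuousOn F (Icc 0 x) := by
    have hden : ∀ t ∈ Icc (0:ℝ) x, (1:ℝ) - t ≠ 0 := by
      intro t ht; have := ht.2; intro h; nlinarith [ht.1]
    have c1 : ContinuousOn (fun t : ℝ => t * (1 - y) / (y * (1 - t))) (Icc 0 x) := by
      apply ContinuousOn.div
      · exact (continuous_id.mul continuous_const).continuousOn
      · exact (continuous_const.mul (continuous_const.sub continuous_id)).continuousOn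
      · intro t ht
        exact mul_ne_zero hy0.ne' (hden t ht)
    have m1 : MapsTo (fun t : ℝ => t * (1 - y) / (y * (1 - t))) (Icc 0 x) (Icc (-1:ℝ) 1) := by
      intro t ht
      have h1t : 0 < 1 - t := by rcases ht with ⟨h1, h2⟩; linarith
      have hpos : 0 < y * (1 - t) := by positivity
      constructor
      · have : 0 ≤ t * (1 - y) / (y * (1 - t)) := by
          apply div_nonneg (by nlinarith [ht.1]) hpos.le
        linarith
      · rw [div_le_one hpos]; nlinarith [ht.2]
    have c2 : ContinuousOn (fun t : ℝ => (1 - y) / (1 - t)) (Icc 0 x) := by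
      apply ContinuousOn.div continuousOn_const
        (continuous_const.sub continuous_id).continuousOn
      exact hden
    have m2 : MapsTo (fun t : ℝ => (1 - y) / (1 - t)) (Icc 0 x) (Icc (-1:ℝ) 1) := by
      intro t ht
      have h1t : 0 < 1 - t := by rcases ht with ⟨h1, h2⟩; linarith
      constructor
      · have : 0 ≤ (1 - y) / (1 - t) := div_nonneg hy1.le h1t.le
        linarith
      · rw [div_le_one h1t]; rcases ht with ⟨h1, h2⟩; linarith
    have m3 : MapsTo (fun t : ℝ => t / y) (Icc 0 x) (Icc (-1:ℝ) 1) := by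
      intro t ht
      constructor
      · have : 0 ≤ t / y := div_nonneg ht.1 hy0.le
        linarith
      · rw [div_le_one hy0]; rcases ht with ⟨h1, h2⟩; linarith
    have m4 : MapsTo (fun t : ℝ => t) (Icc (0:ℝ) x) (Icc (-1:ℝ) 1) := by
      intro t ht
      exact ⟨by linarith [ht.1], by rcases ht with ⟨h1, h2⟩; linarith⟩
    have clog : ContinuousOn (fun t : ℝ => Real.log ((1 - y) / (1 - t))) (Icc 0 x) := by
      apply c2.log
      intro t ht
      have h1t : 0 < 1 - t := by rcases ht with ⟨h1, h2⟩; linarith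
      positivity
    exact (((((Li2_continuousOn.comp c1 m1).sub continuousOn_const).add
      (Li2_continuousOn.comp continuousOn_id m4)).sub
      (Li2_continuousOn.comp ((continuous_id.div_const y).continuousOn) m3)).sub
      (Li2_continuousOn.comp c2 m2)).sub
      ((clog.const_smul (Real.log y)).sub continuousOn_const)
  -- zero derivative on (0, x)
  have hderiv : ∀ t ∈ Ioo 0 x, HasDerivAt F 0 t := by
    intro t ht
    obtain ⟨ht0, htx⟩ := ht
    have hty : t < y := htx.trans hxy
    have h1t : (0:ℝ) < 1 - t := by linarith
    have hyt : (0:ℝ) < y - t := by linarith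
    have ht0' : t ≠ 0 := ht0.ne'
    have h1t' : (1:ℝ) - t ≠ 0 := h1t.ne'
    have hyt' : y - t ≠ 0 := hyt.ne'
    have hy' : y ≠ 0 := hy0.ne'
    have hy1' : (1:ℝ) - y ≠ 0 := hy1.ne'
    -- inner derivative for φ1
    have hφ1 : HasDerivAt (fun u : ℝ => u * (1 - y) / (y * (1 - u)))
        ((1 - y) / (y * (1 - t) ^ 2)) t := by
      have hnum : HasDerivAt (fun u : ℝ => u * (1 - y)) (1 - y) t := by
        simpa using (hasDerivAt_id t).mul_const (1 - y)
      have hd : HasDerivAt (fun u : ℝ => y * (1 - u)) (y * (-1)) t := by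
        exact (((hasDerivAt_id t).const_sub 1)).const_mul y
      have := hnum.div hd (mul_ne_zero hy' h1t')
      refine this.congr_deriv ?_
      field_simp
      ring
    have hu0 : 0 < t * (1 - y) / (y * (1 - t)) := by positivity
    have hu1 : t * (1 - y) / (y * (1 - t)) < 1 := by
      rw [div_lt_one (by positivity)]; nlinarith
    have H1 : HasDerivAt (fun u : ℝ => Li2 (u * (1 - y) / (y * (1 - u))))
        (-(Real.log (y - t) - Real.log y - Real.log (1 - t)) / (t * (1 - t))) t := by
      have := (Li2_hasDerivAt hu0 hu1).comp t hφ1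
      refine this.congr_deriv ?_
      have e1 : 1 - t * (1 - y) / (y * (1 - t)) = (y - t) / (y * (1 - t)) := by
        field_simp; ring
      rw [e1, Real.log_div hyt' (mul_ne_zero hy' h1t'), Real.log_mul hy' h1t']
      field_simp
      ring
    have H3 : HasDerivAt Li2 (-Real.log (1 - t) / t) t :=
      Li2_hasDerivAt ht0 (by linarith)
    have H4 : HasDerivAt (fun u : ℝ => Li2 (u / y))
        (-(Real.log (y - t) - Real.log y) / t) t := by
      have hin : HasDerivAt (fun u : ℝ => u / y) (1 / y) t := by
        simpa using (hasDerivAt_id t).div_const y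
      have hv0 : 0 < t / y := by positivity
      have hv1 : t / y < 1 := by rw [div_lt_one hy0]; exact hty
      have := (Li2_hasDerivAt hv0 hv1).comp t hin
      refine this.congr_deriv ?_
      have e2 : 1 - t / y = (y - t) / y := by field_simp
      rw [e2, Real.log_div hyt' hy']
      field_simp
    have H5 : HasDerivAt (fun u : ℝ => Li2 ((1 - y) / (1 - u)))
        (-(Real.log (y - t) - Real.log (1 - t)) / (1 - t)) t := by
      have hd : HasDerivAt (fun u : ℝ => 1 - u) (-1) t := by
        simpa using (hasDerivAt_id t).const_sub 1
      have hin : HasDerivAt (fun u : ℝ => (1 - y) / (1 - u))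
          ((1 - y) / (1 - t) ^ 2) t := by
        have := (hasDerivAt_const t (1 - y)).div hd h1t'
        refine this.congr_deriv ?_
        field_simp
        ring
      have hw0 : 0 < (1 - y) / (1 - t) := by positivity
      have hw1 : (1 - y) / (1 - t) < 1 := by rw [div_lt_one h1t]; linarith
      have := (Li2_hasDerivAt hw0 hw1).comp t hin
      refine this.congr_deriv ?_
      have e3 : 1 - (1 - y) / (1 - t) = (y - t) / (1 - t) := by field_simp; ring
      rw [e3, Real.log_div hyt' h1t']
      field_simp
    have H6 : HasDerivAt (fun u : ℝ => Real.log ((1 - y) / (1 - u))) (1 / (1 - t)) t := by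
      have hd : HasDerivAt (fun u : ℝ => 1 - u) (-1) t := by
        simpa using (hasDerivAt_id t).const_sub 1
      have hin : HasDerivAt (fun u : ℝ => (1 - y) / (1 - u))
          ((1 - y) / (1 - t) ^ 2) t := by
        have := (hasDerivAt_const t (1 - y)).div hd h1t'
        refine this.congr_deriv ?_
        field_simp
        ring
      have harg : (1 - y) / (1 - t) ≠ 0 := by positivity
      have := (Real.hasDerivAt_log harg).comp t hin
      refine this.congr_deriv ?_
      field_simp
    have htotal := ((((H1.sub_const (Li2 y)).add H3).sub H4).sub H5).sub
      ((H6.const_mul (Real.log y)).sub_const (π ^ 2 / 6))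
    refine htotal.congr_deriv ?_
    field_simp
    ring
  -- MVT
  obtain ⟨c, hc, hc0⟩ := exists_hasDerivAt_eq_slope F (fun _ => 0) hx hcont hderiv
  have hFx : F x = F 0 := by
    field_simp [hx.ne'] at hc0
    linarith
  have hF0 : F 0 = 0 := by
    have h := euler_reflection hy0 hy
    simp only [hF, Li2_zero, zero_mul, zero_div, sub_zero, div_one, zero_sub, sub_self]
    norm_num [Li2_zero]
    linarith
  have := hFx.trans hF0
  simp only [hF] at this
  linarith
end
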